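/- Let F be an infinite field, let A be a p×m matrix whose entries are multivariate polynomials in MvPolynomial (Fin N) F, and let r be the rank of A over the fraction field of MvPolynomial (Fin N) F. Then r equals the maximum, over all points x : Fin N → F, of the rank of the evaluated matrix A(x) over F; that is, the generic rank of A is attained by some evaluation and bounds all evaluations. -/

import Mathlib

open Matrix

/-- Rank is at least `s` if some `s×s` submatrix has nonzero determinant. -/
lemma le_rank_of_det_submatrix_ne_zero {K : Type*} [Field K] {p m s : ℕ}
    (A : Matrix (Fin p) (Fin m) K) (f : Fin s → Fin p) (g : Fin s → Fin m)
    (h : (A.submatrix f g).det ≠ 0) : s ≤ A.rank := by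
  have hu : IsUnit (A.submatrix f g) := (Matrix.isUnit_iff_isUnit_det _).2 h.isUnit
  have hrk : (A.submatrix f g).rank = s := by
    simpa using Matrix.rank_of_isUnit _ hu
  have key : A.submatrix f g =
      ((1 : Matrix (Fin p) (Fin p) K).submatrix f (Equiv.refl _)) * A *
        ((1 : Matrix (Fin m) (Fin m) K).submatrix (Equiv.refl _) g) := by
    rw [Matrix.one_submatrix_mul, Matrix.mul_submatrix_one]
    simp [Function.comp_def]
  calc s = (A.submatrix f g).rank := hrk.symm
    _ ≤ A.rank := by
        rw [key]
        exact le_trans (Matrix.rank_mul_le_left _ _) (Matrix.rank_mul_le_right _ _)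

/-- A matrix of rank `r` has `r` linearly independent columns. -/
lemma exists_li_cols {K : Type*} [Field K] {p m r : ℕ}
    (A : Matrix (Fin p) (Fin m) K) (h : A.rank = r) :
    ∃ g : Fin r → Fin m, LinearIndependent K (fun j => Aᵀ (g j)) := by
  obtain ⟨t, hts, hspan, hli⟩ := exists_linearIndependent K (Set.range Aᵀ)
  have htfin : t.Finite := (Set.finite_range Aᵀ).subset hts
  haveI := htfin.fintype
  have hcard : t.toFinset.card = r := by
    rw [← finrank_span_set_eq_card hli, hspan, show Aᵀ = A.col from rfl,
      ← Matrix.rank_eq_finrank_span_cols, h]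
  have hcard' : Fintype.card t = r := by rwa [Set.toFinset_card] at hcard
  obtain ⟨e⟩ := Fintype.card_eq.mp (hcard'.trans (Fintype.card_fin r).symm)
  have hli2 : LinearIndependent K fun i : Fin r => ((e.symm i : t) : Fin p → K) :=
    hli.comp e.symm e.symm.injective
  choose g hg using fun i : Fin r => hts (e.symm i).2
  exact ⟨g, by simpa only [hg] using hli2⟩

/-- A matrix of rank `r` has a nonvanishing `r×r` minor. -/
lemma exists_det_submatrix_ne_zero {K : Type*} [Field K] {p m r : ℕ}
    (A : Matrix (Fin p) (Fin m) K) (h : A.rank = r) :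
    ∃ (f : Fin r → Fin p) (g : Fin r → Fin m), (A.submatrix f g).det ≠ 0 := by
  obtain ⟨g, hg⟩ := exists_li_cols A h
  set B : Matrix (Fin p) (Fin r) K := A.submatrix id g with hB
  have hBT : Bᵀ = fun j => Aᵀ (g j) := by
    ext j i; simp [hB]
  have hBrank : B.rank = r := by
    rw [Matrix.rank_eq_finrank_span_cols, show B.col = Bᵀ from rfl, hBT]
    simpa using finrank_span_eq_card hg
  have hBTrank : Bᵀ.rank = r := by rw [Matrix.rank_transpose]; exact hBrank
  obtain ⟨f, hf⟩ := exists_li_cols Bᵀ hBTrank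
  rw [Matrix.transpose_transpose] at hf
  refine ⟨f, g, ?_⟩
  have hsub : A.submatrix f g = fun i => B (f i) := by
    ext i j; simp [hB]
  have : LinearIndependent K (fun i => (A.submatrix f g) i) := by
    rw [hsub]; exact hf
  have hu : IsUnit (A.submatrix f g) := Matrix.linearIndependent_rows_iff_isUnit.mp this
  exact ((Matrix.isUnit_iff_isUnit_det _).mp hu).ne_zero
lemma det_submatrix_map {R S : Type*} [CommRing R] [CommRing S] {p m s : ℕ}
    (A : Matrix (Fin p) (Fin m) R) (ψ : R →+* S)
    (f : Fin s → Fin p) (g : Fin s → Fin m) :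
    ((A.map ψ).submatrix f g).det = ψ ((A.submatrix f g).det) := by
  rw [RingHom.map_det]; rfl

/-- The generic rank of a polynomial matrix over an infinite field, i.e. its
rank over the fraction field, is attained by some evaluation and bounds the
rank of every evaluation: `r = max_x rank A(x)`. -/
theorem generic_rank_eq_max_rank_eval
    {F : Type*} [Field F] [Infinite F] {N p m : ℕ}
    (A : Matrix (Fin p) (Fin m) (MvPolynomial (Fin N) F)) (r : ℕ)
    (hr : (A.map (algebraMap (MvPolynomial (Fin N) F)
      (FractionRing (MvPolynomial (Fin N) F)))).rank = r) :
    (∃ x : Fin N → F, (A.map (MvPolynomial.eval x)).rank = r) ∧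
    (∀ x : Fin N → F, (A.map (MvPolynomial.eval x)).rank ≤ r) := by
  have hφinj : Function.Injective (algebraMap (MvPolynomial (Fin N) F)
      (FractionRing (MvPolynomial (Fin N) F))) :=
    IsFractionRing.injective _ _
  have bound : ∀ x : Fin N → F, (A.map (MvPolynomial.eval x)).rank ≤ r := by
    intro x
    obtain ⟨f, g, hdet⟩ :=
      exists_det_submatrix_ne_zero (A.map (MvPolynomial.eval x)) rfl
    rw [det_submatrix_map A (MvPolynomial.eval x)] at hdet
    have hd : (A.submatrix f g).det ≠ 0 := fun h0 => hdet (by rw [h0, map_zero])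
    have hdK : ((A.map (algebraMap (MvPolynomial (Fin N) F)
        (FractionRing (MvPolynomial (Fin N) F)))).submatrix f g).det ≠ 0 := by
      rw [det_submatrix_map A (algebraMap _ _)]
      exact fun h0 => hd (hφinj (by rw [h0, map_zero]))
    have := le_rank_of_det_submatrix_ne_zero _ f g hdK
    rwa [hr] at this
  refine ⟨?_, bound⟩
  obtain ⟨f, g, hdet⟩ := exists_det_submatrix_ne_zero _ hr
  rw [det_submatrix_map A (algebraMap _ _)] at hdet
  have hd : (A.submatrix f g).det ≠ 0 := fun h0 => hdet (by rw [h0, map_zero])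
  have hx : ∃ x : Fin N → F, MvPolynomial.eval x ((A.submatrix f g).det) ≠ 0 := by
    by_contra hc
    push_neg at hc
    exact hd (MvPolynomial.funext fun x => by rw [hc x, map_zero])
  obtain ⟨x, hx⟩ := hx
  refine ⟨x, le_antisymm (bound x) ?_⟩
  apply le_rank_of_det_submatrix_ne_zero (A.map (MvPolynomial.eval x)) f g
  rw [det_submatrix_map A (MvPolynomial.eval x)]
  exact hx
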